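/- Fix ε ∈ (0,1/2) and K > 0. There is a constant C = C(ε, K) such that for all T ≥ 2, all M with T^ε ≤ M ≤ T^{1−ε}, every real N ≥ 2, and all complex numbers a_n supported on the integers n with N < n ≤ 2N: MT · Σ_{1 ≤ q ≤ K·N/T} (1/q) ∫_{−M^ε/M}^{M^ε/M} Σ_{1 ≤ c ≤ K·N/(Tq)} (1/c) Σ_{α mod c, gcd(α,c)=1} |Σ_{N < n ≤ 2N} a_n e(αn/c) e(nt/(cq))|² dt ≤ C · M · N · (TN)^ε · Σ_{N < n ≤ 2N} |a_n|². -/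

import Mathlib

open scoped Classical
open MeasureTheory

/-- `e(x) = exp(2πix)`. -/
noncomputable def e (x : ℝ) : ℂ := Complex.exp (2 * Real.pi * Complex.I * x)

set_option maxHeartbeats 3000000


lemma e_add (x y : ℝ) : e (x + y) = e x * e y := by
  rw [e, e, e, ← Complex.exp_add]; push_cast; ring_nf

lemma conj_e (x : ℝ) : (starRingEnd ℂ) (e x) = e (-x) := by
  have h : ((2:ℂ) * Real.pi * Complex.I * x) = (((2:ℝ) * Real.pi * x : ℝ) : ℂ) * Complex.I := by
    push_cast; ring
  rw [e, e, ← Complex.exp_conj, h, map_mul, Complex.conj_ofReal, Complex.conj_I]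
  congr 1
  push_cast; ring

lemma continuous_e : Continuous e := by
  unfold e; fun_prop

lemma integral_e_ne {k : ℤ} (hk : k ≠ 0) : (∫ x in (-1:ℝ)..1, e (k * x)) = 0 := by
  have h1 : ∀ x : ℝ, e ((k:ℝ) * x) = Complex.exp ((2 * (Real.pi:ℂ) * Complex.I * k) * x) := by
    intro x; rw [e]; push_cast; ring_nf
  have hc : (2 * (Real.pi:ℂ) * Complex.I * k) ≠ 0 := by
    simp [Real.pi_ne_zero, Complex.I_ne_zero, hk]
  rw [intervalIntegral.integral_congr (fun x _ => h1 x), integral_exp_mul_complex hc]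
  have h2 : ∀ m : ℤ, Complex.exp ((2 * (Real.pi:ℂ) * Complex.I * k) * m) = 1 := by
    intro m
    rw [show (2 * (Real.pi:ℂ) * Complex.I * k) * m = (k * m : ℤ) * (2 * Real.pi * Complex.I) by
      push_cast; ring]
    exact Complex.exp_int_mul_two_pi_mul_I _
  have ha : Complex.exp ((2 * (Real.pi:ℂ) * Complex.I * k) * ((1:ℝ):ℂ)) = 1 := by
    simpa using h2 1
  have hb : Complex.exp ((2 * (Real.pi:ℂ) * Complex.I * k) * ((-1:ℝ):ℂ)) = 1 := by
    simpa using h2 (-1)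
  rw [ha, hb]; simp

lemma parseval (F : Finset ℕ) (b : ℕ → ℂ) :
    (∫ x in (-1:ℝ)..1, ‖∑ n ∈ F, b n * e (n * x)‖ ^ 2) = 2 * ∑ n ∈ F, ‖b n‖ ^ 2 := by
  classical
  have hcont : ∀ (n m : ℕ), Continuous fun x : ℝ => e (((n - m : ℤ) : ℝ) * x) :=
    fun n m => continuous_e.comp (by fun_prop)
  have key : (∫ x in (-1:ℝ)..1,
      ∑ n ∈ F, ∑ m ∈ F, (b n * (starRingEnd ℂ) (b m)) * e (((n - m : ℤ) : ℝ) * x))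
      = ((2 * ∑ n ∈ F, ‖b n‖ ^ 2 : ℝ) : ℂ) := by
    rw [intervalIntegral.integral_finset_sum]
    · have : ∀ n ∈ F, (∫ x in (-1:ℝ)..1,
          ∑ m ∈ F, (b n * (starRingEnd ℂ) (b m)) * e (((n - m : ℤ) : ℝ) * x))
          = (if n ∈ F then b n * (starRingEnd ℂ) (b n) * 2 else 0) := by
        intro n hn
        rw [intervalIntegral.integral_finset_sum]
        · rw [Finset.sum_eq_single n]
          · simp only [hn, if_true]
            rw [intervalIntegral.integral_const_mul, sub_self]
            norm_num [e]
          · intro m hm hmn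
            rw [intervalIntegral.integral_const_mul, integral_e_ne (sub_ne_zero.mpr (by exact_mod_cast hmn.symm))]
            simp
          · intro h; exact absurd hn h
        · intro m _
          exact (continuous_const.mul (hcont n m)).intervalIntegrable _ _
      rw [Finset.sum_congr rfl this]
      simp only [Finset.sum_ite_mem, Finset.inter_self]
      rw [show ∑ n ∈ F, b n * (starRingEnd ℂ) (b n) * 2
          = ((2 * ∑ n ∈ F, ‖b n‖ ^ 2 : ℝ) : ℂ) by
        push_cast
        rw [Finset.mul_sum]
        refine Finset.sum_congr rfl fun n _ => ?_
        rw [Complex.mul_conj]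
        rw [Complex.normSq_eq_norm_sq]
        push_cast
        ring]
    · intro n _
      apply Continuous.intervalIntegrable
      exact continuous_finset_sum _ fun m _ => continuous_const.mul (hcont n m)
  have expand : ∀ x : ℝ, ((‖∑ n ∈ F, b n * e (n * x)‖ ^ 2 : ℝ) : ℂ)
      = ∑ n ∈ F, ∑ m ∈ F, (b n * (starRingEnd ℂ) (b m)) * e (((n - m : ℤ) : ℝ) * x) := by
    intro x
    have : ((‖∑ n ∈ F, b n * e (n * x)‖ ^ 2 : ℝ) : ℂ)
        = (∑ n ∈ F, b n * e (n * x)) * (starRingEnd ℂ) (∑ m ∈ F, b m * e (m * x)) := by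
      rw [Complex.mul_conj, Complex.normSq_eq_norm_sq]
    rw [this, map_sum, Finset.sum_mul_sum]
    refine Finset.sum_congr rfl fun n _ => Finset.sum_congr rfl fun m _ => ?_
    rw [map_mul, conj_e, mul_mul_mul_comm, ← e_add]
    congr 2
    push_cast; ring
  have : (∫ x in (-1:ℝ)..1, ((‖∑ n ∈ F, b n * e (n * x)‖ ^ 2 : ℝ) : ℂ))
      = ((2 * ∑ n ∈ F, ‖b n‖ ^ 2 : ℝ) : ℂ) := by
    rw [intervalIntegral.integral_congr (fun x _ => expand x)]
    exact key
  rw [intervalIntegral.integral_ofReal] at this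
  exact_mod_cast this

lemma swap_int (δ : ℝ) (S : Finset ℕ) (g : ℕ → ℕ → ℝ → ℝ) (hg : ∀ c α, Continuous (g c α))
    (P : ℕ → ℕ → Prop) [inst : ∀ c α, Decidable (P c α)] :
    (∫ t in (-δ)..δ, ∑ c ∈ S, (1/(c:ℝ)) * ∑ α ∈ Finset.range c, if P c α then g c α t else 0)
    = ∑ c ∈ S, (1/(c:ℝ)) * ∑ α ∈ Finset.range c,
        if P c α then (∫ t in (-δ)..δ, g c α t) else 0 := by
  have hint2 : ∀ c α, IntervalIntegrable (fun t => if P c α then g c α t else 0)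
      volume (-δ) δ := by
    intro c α
    by_cases hu : P c α
    · simp only [hu, if_true]; exact (hg c α).intervalIntegrable _ _
    · simp only [hu, if_false]; exact intervalIntegrable_const
  have hcs : ∀ c : ℕ, Continuous
      (fun t : ℝ => (1/(c:ℝ)) * ∑ α ∈ Finset.range c, if P c α then g c α t else 0) := by
    intro c
    refine continuous_const.mul (continuous_finset_sum _ fun α _ => ?_)
    by_cases hu : P c α
    · simpa only [hu, if_true] using hg c α
    · simp only [hu, if_false]; exact continuous_const
  rw [intervalIntegral.integral_finset_sum
    (f := fun (c : ℕ) (t : ℝ) => (1/(c:ℝ)) * ∑ α ∈ Finset.range c, if P c α then g c α t else 0)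
    (fun c _ => (hcs c).intervalIntegrable _ _)]
  refine Finset.sum_congr rfl fun c _ => ?_
  rw [intervalIntegral.integral_const_mul]
  congr 1
  rw [intervalIntegral.integral_finset_sum
    (f := fun (α : ℕ) (t : ℝ) => if P c α then g c α t else 0)
    (fun α _ => hint2 c α)]
  refine Finset.sum_congr rfl fun α _ => ?_
  by_cases hu : P c α
  · simp only [hu, if_true]
  · simp only [hu, if_false, intervalIntegral.integral_zero]


/-- Bound for the off-diagonal large-sieve expression: for `T^ε ≤ M ≤ T^{1-ε}` and
complex `a_n` supported on `N < n ≤ 2N`,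
`MT ∑_{q ≤ KN/T} (1/q) ∫_{-M^ε/M}^{M^ε/M} ∑_{c ≤ KN/(Tq)} (1/c) ∑*_{α mod c}
  |∑_n a_n e(αn/c) e(nt/(cq))|² dt ≤ C M N (TN)^ε ∑ |a_n|²`. -/
theorem offdiagonal_large_sieve_bound (ε : ℝ) (hε : ε ∈ Set.Ioo (0 : ℝ) (1 / 2))
    (K : ℝ) (hK : 0 < K) :
    ∃ C : ℝ, ∀ T M : ℝ, 2 ≤ T → T ^ ε ≤ M → M ≤ T ^ (1 - ε) →
      ∀ N : ℝ, 2 ≤ N → ∀ a : ℕ → ℂ,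
      (∀ n : ℕ, a n ≠ 0 → (N < n ∧ (n : ℝ) ≤ 2 * N)) →
      (M * T * ∑ q ∈ Finset.Icc 1 ⌊K * N / T⌋₊, (1 / (q : ℝ)) *
          ∫ t in (-(M ^ ε / M))..(M ^ ε / M),
            ∑ c ∈ Finset.Icc 1 ⌊K * N / (T * q)⌋₊, (1 / (c : ℝ)) *
              ∑ α ∈ Finset.range c,
                if IsUnit (α : ZMod c) then
                  ‖∑ n ∈ Finset.Ioc ⌊N⌋₊ ⌊2 * N⌋₊,
                    a n * e ((α : ℝ) * n / c) * e ((n : ℝ) * t / (c * q))‖ ^ 2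
                else 0)
        ≤ C * M * N * (T * N) ^ ε * ∑ n ∈ Finset.Ioc ⌊N⌋₊ ⌊2 * N⌋₊, ‖a n‖ ^ 2 := by
  classical
  obtain ⟨hε0, hεhalf⟩ := hε
  refine ⟨4 * K * (1 + |Real.log K| + 1 / ε), ?_⟩
  intro T M h2T hTM hMT N h2N a _
  set F := Finset.Ioc ⌊N⌋₊ ⌊2 * N⌋₊ with hF
  set A := ∑ n ∈ F, ‖a n‖ ^ 2 with hA
  have hA0 : (0:ℝ) ≤ A := Finset.sum_nonneg fun n _ => sq_nonneg _
  have hT0 : (0:ℝ) < T := by linarith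
  have hT1 : (1:ℝ) ≤ T := by linarith
  have hN0 : (0:ℝ) < N := by linarith
  have hM1 : (1:ℝ) < M := by
    refine lt_of_lt_of_le ?_ hTM
    rw [show (1:ℝ) = T ^ (0:ℝ) by rw [Real.rpow_zero]]
    exact Real.rpow_lt_rpow_left_iff (by linarith) |>.mpr hε0
  have hM0 : (0:ℝ) < M := by linarith
  set δ := M ^ ε / M with hδdef
  have hδ0 : 0 < δ := div_pos (Real.rpow_pos_of_pos hM0 ε) hM0
  have hδ1 : δ ≤ 1 := by
    rw [hδdef, div_le_one hM0]
    calc M ^ ε ≤ M ^ (1:ℝ) := Real.rpow_le_rpow_of_exponent_le hM1.le (by linarith)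
    _ = M := Real.rpow_one M
  set f : ℝ → ℝ := fun x => ‖∑ n ∈ F, a n * e (n * x)‖ ^ 2 with hfdef
  have hfc : Continuous f := by
    apply Continuous.pow
    apply Continuous.norm
    exact continuous_finset_sum _ fun n _ =>
      continuous_const.mul (continuous_e.comp (by fun_prop))
  have hfnn : ∀ x, 0 ≤ f x := fun x => sq_nonneg _
  have hfint : ∀ u v : ℝ, IntervalIntegrable f volume u v := fun u v => hfc.intervalIntegrable u v
  have hPar : (∫ x in (-1:ℝ)..1, f x) = 2 * A := parseval F a
  have hcont2 : ∀ (c q α : ℕ), Continuous fun t : ℝ =>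
      ‖∑ n ∈ F, a n * e ((α:ℝ) * n / c) * e ((n:ℝ) * t / (c * q))‖ ^ 2 := by
    intro c q α
    apply Continuous.pow
    apply Continuous.norm
    exact continuous_finset_sum _ fun n _ =>
      continuous_const.mul (continuous_e.comp (by fun_prop))
  -- telescoping bound
  have hsum : ∀ c : ℕ, 1 ≤ c →
      ∑ α ∈ Finset.range c, ∫ x in (((α:ℝ)-1)/c)..(((α:ℝ)+1)/c), f x ≤ 4 * A := by
    intro c hc1
    have hc0 : (0:ℝ) < c := by exact_mod_cast hc1
    have hc1' : (1:ℝ) ≤ c := by exact_mod_cast hc1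
    have hsplit : ∀ α : ℕ, (∫ x in (((α:ℝ)-1)/c)..(((α:ℝ)+1)/c), f x)
        = (∫ x in (((α:ℝ)-1)/c)..((α:ℝ)/c), f x) + ∫ x in ((α:ℝ)/c)..(((α:ℝ)+1)/c), f x := by
      intro α
      rw [intervalIntegral.integral_add_adjacent_intervals (hfint _ _) (hfint _ _)]
    rw [Finset.sum_congr rfl fun α _ => hsplit α, Finset.sum_add_distrib]
    have T1 : ∑ α ∈ Finset.range c, (∫ x in (((α:ℝ)-1)/c)..((α:ℝ)/c), f x) ≤ 2 * A := by
      have h := intervalIntegral.sum_integral_adjacent_intervals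
        (a := fun k : ℕ => ((k:ℝ)-1)/(c:ℝ)) (μ := volume) (f := f) (n := c)
        (fun k _ => hfint _ _)
      have heq : ∑ α ∈ Finset.range c, (∫ x in (((α:ℝ)-1)/c)..((α:ℝ)/c), f x)
          = ∫ x in ((((0:ℕ):ℝ)-1)/(c:ℝ))..((((c:ℕ):ℝ)-1)/(c:ℝ)), f x := by
        rw [← h]
        refine Finset.sum_congr rfl fun k _ => ?_
        congr 1
        push_cast; ring
      rw [heq, ← hPar]
      refine intervalIntegral.integral_mono_interval ?_ ?_ ?_
        (Filter.Eventually.of_forall fun x => hfnn x) (hfint _ _)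
      · rw [le_div_iff₀ hc0]; push_cast; linarith
      · exact (div_le_div_iff_of_pos_right hc0).mpr (by push_cast; linarith)
      · rw [div_le_one hc0]; push_cast; linarith
    have T2 : ∑ α ∈ Finset.range c, (∫ x in ((α:ℝ)/c)..(((α:ℝ)+1)/c), f x) ≤ 2 * A := by
      have h := intervalIntegral.sum_integral_adjacent_intervals
        (a := fun k : ℕ => (k:ℝ)/(c:ℝ)) (μ := volume) (f := f) (n := c)
        (fun k _ => hfint _ _)
      have heq : ∑ α ∈ Finset.range c, (∫ x in ((α:ℝ)/c)..(((α:ℝ)+1)/c), f x)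
          = ∫ x in (((0:ℕ):ℝ)/(c:ℝ))..(((c:ℕ):ℝ)/(c:ℝ)), f x := by
        rw [← h]
        refine Finset.sum_congr rfl fun k _ => ?_
        congr 1
        push_cast; ring
      rw [heq, ← hPar]
      refine intervalIntegral.integral_mono_interval ?_ ?_ ?_
        (Filter.Eventually.of_forall fun x => hfnn x) (hfint _ _)
      · norm_num
      · exact (div_le_div_iff_of_pos_right hc0).mpr (by push_cast; linarith)
      · rw [div_le_one hc0]
    linarith
  -- key substitution bound
  have hkey : ∀ q c α : ℕ, 1 ≤ q → 1 ≤ c →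
      (∫ t in (-δ)..δ, ‖∑ n ∈ F, a n * e ((α:ℝ) * n / c) * e ((n:ℝ) * t / (c * q))‖ ^ 2)
      ≤ (c:ℝ) * q * ∫ x in (((α:ℝ)-1)/c)..(((α:ℝ)+1)/c), f x := by
    intro q c α hq1 hc1
    have hc0 : (0:ℝ) < c := by exact_mod_cast hc1
    have hq0 : (0:ℝ) < q := by exact_mod_cast hq1
    have hq1' : (1:ℝ) ≤ q := by exact_mod_cast hq1
    have hcq0 : (0:ℝ) < (c:ℝ) * q := by positivity
    have heq : ∀ t : ℝ, ‖∑ n ∈ F, a n * e ((α:ℝ) * n / c) * e ((n:ℝ) * t / (c * q))‖ ^ 2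
        = f ((α:ℝ)/c + ((c:ℝ)*q)⁻¹ * t) := by
      intro t
      simp only [hfdef]
      congr 2
      refine Finset.sum_congr rfl fun n _ => ?_
      rw [mul_assoc, ← e_add]
      congr 1
      field_simp
    have hsub : (∫ t in (-δ)..δ, ‖∑ n ∈ F, a n * e ((α:ℝ) * n / c) * e ((n:ℝ) * t / (c * q))‖ ^ 2)
        = ((c:ℝ)*q) * ∫ x in ((α:ℝ)/c + ((c:ℝ)*q)⁻¹ * (-δ))..((α:ℝ)/c + ((c:ℝ)*q)⁻¹ * δ), f x := by
      rw [intervalIntegral.integral_congr (fun t _ => heq t)]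
      rw [intervalIntegral.integral_comp_add_mul f (by positivity) ((α:ℝ)/c)]
      rw [inv_inv, smul_eq_mul]
    rw [hsub]
    refine mul_le_mul_of_nonneg_left ?_ hcq0.le
    have hr : ((c:ℝ)*q)⁻¹ * δ ≤ 1/(c:ℝ) := by
      rw [inv_mul_eq_div, div_le_div_iff₀ hcq0 hc0]
      nlinarith
    have hr0 : 0 ≤ ((c:ℝ)*q)⁻¹ * δ := by positivity
    have e3 : ((c:ℝ)*q)⁻¹ * (-δ) = -(((c:ℝ)*q)⁻¹ * δ) := by ring
    refine intervalIntegral.integral_mono_interval ?_ ?_ ?_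
      (Filter.Eventually.of_forall fun x => hfnn x) (hfint _ _)
    · rw [e3, show ((α:ℝ)-1)/c = (α:ℝ)/c - 1/c by ring]
      linarith
    · rw [e3]; linarith
    · rw [show ((α:ℝ)+1)/c = (α:ℝ)/c + 1/c by ring]
      linarith
  -- per-q bound
  have hq : ∀ q ∈ Finset.Icc 1 ⌊K * N / T⌋₊,
      (1/(q:ℝ)) * (∫ t in (-δ)..δ, ∑ c ∈ Finset.Icc 1 ⌊K * N / (T * (q:ℝ))⌋₊, (1/(c:ℝ)) *
        ∑ α ∈ Finset.range c, if IsUnit (α : ZMod c) then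
          ‖∑ n ∈ F, a n * e ((α:ℝ) * n / c) * e ((n:ℝ) * t / (c * q))‖ ^ 2 else 0)
      ≤ (1/(q:ℝ)) * (4 * (K * N / T) * A) := by
    intro q hqmem
    obtain ⟨hq1, _⟩ := Finset.mem_Icc.mp hqmem
    have hq0 : (0:ℝ) < q := by exact_mod_cast hq1
    refine mul_le_mul_of_nonneg_left ?_ (by positivity)
    have hint2 : ∀ c α : ℕ, IntervalIntegrable (fun t : ℝ => if IsUnit (α : ZMod c) then
        ‖∑ n ∈ F, a n * e ((α:ℝ) * n / c) * e ((n:ℝ) * t / (c * q))‖ ^ 2 else 0)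
        volume (-δ) δ := by
      intro c α
      by_cases hu : IsUnit (α : ZMod c)
      · simp only [hu, if_true]; exact ((hcont2 c q α).intervalIntegrable _ _)
      · simp only [hu, if_false]; exact intervalIntegrable_const
    have hswap : (∫ t in (-δ)..δ, ∑ c ∈ Finset.Icc 1 ⌊K * N / (T * (q:ℝ))⌋₊, (1/(c:ℝ)) *
          ∑ α ∈ Finset.range c, if IsUnit (α : ZMod c) then
            ‖∑ n ∈ F, a n * e ((α:ℝ) * n / c) * e ((n:ℝ) * t / (c * q))‖ ^ 2 else 0)
        = ∑ c ∈ Finset.Icc 1 ⌊K * N / (T * (q:ℝ))⌋₊, (1/(c:ℝ)) *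
            ∑ α ∈ Finset.range c, if IsUnit (α : ZMod c) then
              (∫ t in (-δ)..δ, ‖∑ n ∈ F, a n * e ((α:ℝ) * n / c) * e ((n:ℝ) * t / (c * q))‖ ^ 2)
            else 0 := by
      exact swap_int δ (Finset.Icc 1 ⌊K * N / (T * (q:ℝ))⌋₊)
        (fun c α t => ‖∑ n ∈ F, a n * e ((α:ℝ) * n / c) * e ((n:ℝ) * t / (c * q))‖ ^ 2)
        (fun c α => hcont2 c q α) (fun c α => IsUnit (α : ZMod c))
    rw [hswap]
    calc ∑ c ∈ Finset.Icc 1 ⌊K * N / (T * (q:ℝ))⌋₊, (1/(c:ℝ)) *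
            ∑ α ∈ Finset.range c, (if IsUnit (α : ZMod c) then
              (∫ t in (-δ)..δ, ‖∑ n ∈ F, a n * e ((α:ℝ) * n / c) * e ((n:ℝ) * t / (c * q))‖ ^ 2)
            else 0)
        ≤ ∑ c ∈ Finset.Icc 1 ⌊K * N / (T * (q:ℝ))⌋₊, 4 * (q:ℝ) * A := by
          refine Finset.sum_le_sum fun c hc => ?_
          obtain ⟨hc1, _⟩ := Finset.mem_Icc.mp hc
          have hc0 : (0:ℝ) < c := by exact_mod_cast hc1
          have step1 : ∑ α ∈ Finset.range c, (if IsUnit (α : ZMod c) then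
                (∫ t in (-δ)..δ, ‖∑ n ∈ F, a n * e ((α:ℝ) * n / c) * e ((n:ℝ) * t / (c * q))‖ ^ 2)
              else 0)
              ≤ ∑ α ∈ Finset.range c, (c:ℝ) * q * ∫ x in (((α:ℝ)-1)/c)..(((α:ℝ)+1)/c), f x := by
            refine Finset.sum_le_sum fun α _ => ?_
            by_cases hu : IsUnit (α : ZMod c)
            · simp only [hu, if_true]; exact hkey q c α hq1 hc1
            · simp only [hu, if_false]
              have hord : (((α:ℝ)-1)/c) ≤ (((α:ℝ)+1)/c) :=
                (div_le_div_iff_of_pos_right hc0).mpr (by linarith)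
              exact mul_nonneg (by positivity)
                (intervalIntegral.integral_nonneg hord (fun x _ => hfnn x))
          have step2 : ∑ α ∈ Finset.range c, (c:ℝ) * q * (∫ x in (((α:ℝ)-1)/c)..(((α:ℝ)+1)/c), f x)
              ≤ (c:ℝ) * q * (4 * A) := by
            rw [← Finset.mul_sum]
            exact mul_le_mul_of_nonneg_left (hsum c hc1) (by positivity)
          calc (1/(c:ℝ)) * ∑ α ∈ Finset.range c, (if IsUnit (α : ZMod c) then
                  (∫ t in (-δ)..δ, ‖∑ n ∈ F, a n * e ((α:ℝ) * n / c) * e ((n:ℝ) * t / (c * q))‖ ^ 2)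
                else 0)
              ≤ (1/(c:ℝ)) * ((c:ℝ) * q * (4 * A)) :=
                mul_le_mul_of_nonneg_left (step1.trans step2) (by positivity)
            _ = 4 * (q:ℝ) * A := by field_simp
      _ = (⌊K * N / (T * (q:ℝ))⌋₊ : ℝ) * (4 * (q:ℝ) * A) := by
          rw [Finset.sum_const, Nat.card_Icc]
          simp [nsmul_eq_mul]
      _ ≤ (K * N / (T * (q:ℝ))) * (4 * (q:ℝ) * A) := by
          refine mul_le_mul_of_nonneg_right (Nat.floor_le (by positivity)) (by positivity)
      _ = 4 * (K * N / T) * A := by field_simp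
  -- harmonic sum bound
  have hP1 : (1:ℝ) ≤ (T*N)^ε := by
    rw [show (1:ℝ) = (1:ℝ)^ε by rw [Real.one_rpow]]
    exact Real.rpow_le_rpow (by norm_num) (by nlinarith) hε0.le
  have habs : 0 ≤ |Real.log K| := abs_nonneg _
  have hlogN0 : 0 ≤ Real.log N := Real.log_nonneg (by linarith)
  have hlogN : Real.log N ≤ (T*N)^ε / ε := by
    refine (Real.log_le_rpow_div hN0.le hε0).trans ?_
    have h1 : N ^ ε ≤ (T*N)^ε := Real.rpow_le_rpow hN0.le (by nlinarith) hε0.le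
    exact (div_le_div_iff_of_pos_right hε0).mpr h1
  have hharm : (∑ q ∈ Finset.Icc 1 ⌊K * N / T⌋₊, (1/(q:ℝ)))
      ≤ (1 + |Real.log K| + 1/ε) * (T*N)^ε := by
    have hharm2 : (∑ q ∈ Finset.Icc 1 ⌊K * N / T⌋₊, (1/(q:ℝ)))
        = ((harmonic ⌊K * N / T⌋₊ : ℚ) : ℝ) := by
      rw [harmonic_eq_sum_Icc]; push_cast; simp [one_div]
    rw [hharm2]
    have hle : ((harmonic ⌊K * N / T⌋₊ : ℚ) : ℝ) ≤ 1 + |Real.log K| + Real.log N := by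
      rcases Nat.eq_zero_or_pos ⌊K * N / T⌋₊ with h0 | hQ1
      · rw [h0]
        norm_num [harmonic]
        linarith
      · have h1 : ((harmonic ⌊K * N / T⌋₊ : ℚ) : ℝ) ≤ 1 + Real.log ⌊K * N / T⌋₊ :=
          harmonic_le_one_add_log _
        have h2 : Real.log ⌊K * N / T⌋₊ ≤ Real.log (K*N) := by
          refine Real.log_le_log (by exact_mod_cast hQ1) ?_
          calc ((⌊K * N / T⌋₊:ℝ)) ≤ K*N/T := Nat.floor_le (by positivity)
            _ ≤ K*N := div_le_self (by positivity) hT1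
        rw [Real.log_mul (ne_of_gt hK) (by linarith)] at h2
        have h3 := le_abs_self (Real.log K)
        linarith
    have key : |Real.log K| ≤ |Real.log K| * (T*N)^ε := le_mul_of_one_le_right habs hP1
    have key2 : Real.log N ≤ 1/ε * (T*N)^ε := by
      have heq2 : (T*N)^ε/ε = 1/ε * (T*N)^ε := by ring
      linarith [hlogN, heq2.le, heq2.ge]
    calc ((harmonic ⌊K * N / T⌋₊ : ℚ) : ℝ) ≤ 1 + |Real.log K| + Real.log N := hle
      _ ≤ (T*N)^ε + |Real.log K| * (T*N)^ε + 1/ε * (T*N)^ε := by linarith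
      _ = (1 + |Real.log K| + 1/ε) * (T*N)^ε := by ring
  -- final assembly
  have hfinal1 : M * T * (∑ q ∈ Finset.Icc 1 ⌊K * N / T⌋₊, (1/(q:ℝ)) * (4 * (K * N / T) * A))
      ≤ M * T * (((1 + |Real.log K| + 1/ε) * (T*N)^ε) * (4 * (K * N / T) * A)) := by
    rw [← Finset.sum_mul]
    exact mul_le_mul_of_nonneg_left
      (mul_le_mul_of_nonneg_right hharm (by positivity)) (by positivity)
  have hfinal2 : M * T * (((1 + |Real.log K| + 1/ε) * (T*N)^ε) * (4 * (K * N / T) * A))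
      = 4 * K * (1 + |Real.log K| + 1/ε) * M * N * (T*N)^ε * A := by
    field_simp
  exact le_trans (mul_le_mul_of_nonneg_left (Finset.sum_le_sum hq) (by positivity))
    (hfinal1.trans_eq hfinal2)
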